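/- For every nonempty set E ⊆ ℝ^d and every r > 0 such that vol(E_r) < ∞, one has limsup_{h→0+} (vol(E_{r+h}) − vol(E_r))/h ≤ (d/r) · vol(E_r). -/

import Mathlib

open MeasureTheory Metric Filter Set
open scoped ENNReal Topology NNReal RealInnerProductSpace

private lemma aux_inner {d : ℕ} (a b c e : EuclideanSpace ℝ (Fin d))
    (h1 : dist a c ≤ dist a e) (h2 : dist b e ≤ dist b c) :
    0 ≤ ⟪a - b, c - e⟫ := by
  have h1' : ‖a - c‖ ^ 2 ≤ ‖a - e‖ ^ 2 := by
    rw [dist_eq_norm] at h1 h2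
    exact pow_le_pow_left₀ (norm_nonneg _) h1 2
  have h2' : ‖b - e‖ ^ 2 ≤ ‖b - c‖ ^ 2 := by
    rw [dist_eq_norm] at h1 h2
    exact pow_le_pow_left₀ (norm_nonneg _) h2 2
  rw [norm_sub_sq_real, norm_sub_sq_real] at h1' h2'
  rw [inner_sub_left, inner_sub_right, inner_sub_right]
  linarith

private lemma aux_norm {d : ℕ} (s t : ℝ) (hs : 0 ≤ s) (ht : 0 ≤ t)
    (a b : EuclideanSpace ℝ (Fin d)) (h : 0 ≤ ⟪a, b⟫) :
    s * ‖a‖ ≤ ‖s • a + t • b‖ := by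
  have hsq : (s * ‖a‖) ^ 2 ≤ ‖s • a + t • b‖ ^ 2 := by
    rw [norm_add_sq_real, real_inner_smul_left, real_inner_smul_right,
      norm_smul, norm_smul, Real.norm_eq_abs, Real.norm_eq_abs,
      abs_of_nonneg hs, abs_of_nonneg ht]
    nlinarith [norm_nonneg a, norm_nonneg b, mul_nonneg (mul_nonneg hs ht) h]
  have h0 : 0 ≤ s * ‖a‖ := mul_nonneg hs (norm_nonneg _)
  nlinarith [norm_nonneg (s • a + t • b)]

set_option maxHeartbeats 1000000 in
/-- Kneser's inequality: `vol(E_{l·r}) ≤ l^d · vol(E_r)` for `l ≥ 1`. -/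
private lemma kneser {d : ℕ} (E : Set (EuclideanSpace ℝ (Fin d))) (hE : E.Nonempty)
    (r : ℝ) (hr : 0 < r) (l : ℝ) (hl : 1 ≤ l) :
    volume (thickening (l * r) E) ≤ ENNReal.ofReal (l ^ d) * volume (thickening r E) := by
  have hl0 : 0 < l := lt_of_lt_of_le one_pos hl
  set F := closure E with hFdef
  have hF : IsClosed F := isClosed_closure
  have hFne : F.Nonempty := hE.closure
  rw [← thickening_closure (s := E) (δ := l * r), ← thickening_closure (s := E) (δ := r)]
  set S := thickening (l * r) F with hSdef
  set T := thickening r F with hTdef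
  -- nearest point map
  have hex : ∀ z : EuclideanSpace ℝ (Fin d), ∃ y ∈ F, infDist z F = dist z y := fun z =>
    hF.exists_infDist_eq_dist hFne z
  choose y hyF hyd using hex
  set Φ : EuclideanSpace ℝ (Fin d) → EuclideanSpace ℝ (Fin d) :=
    fun z => (1 / l) • z + (1 - 1 / l) • y z with hΦ
  have hs0 : (0 : ℝ) ≤ 1 / l := by positivity
  have ht0 : (0 : ℝ) ≤ 1 - 1 / l := by
    have : 1 / l ≤ 1 := by
      rw [div_le_one hl0]; exact hl
    linarith
  -- anti-Lipschitz estimate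
  have key : ∀ z₁ z₂, (1 / l) * dist z₁ z₂ ≤ dist (Φ z₁) (Φ z₂) := by
    intro z₁ z₂
    have hdiff : Φ z₁ - Φ z₂ = (1 / l) • (z₁ - z₂) + (1 - 1 / l) • (y z₁ - y z₂) := by
      simp only [hΦ]; module
    have hinner : 0 ≤ ⟪z₁ - z₂, y z₁ - y z₂⟫ := by
      apply aux_inner
      · rw [← hyd z₁]; exact infDist_le_dist_of_mem (hyF z₂)
      · rw [← hyd z₂]; exact infDist_le_dist_of_mem (hyF z₁)
    rw [dist_eq_norm, dist_eq_norm, hdiff]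
    exact aux_norm _ _ hs0 ht0 _ _ hinner
  -- Φ maps S into T
  have hmaps : ∀ z ∈ S, Φ z ∈ T := by
    intro z hz
    have hzS : infDist z F < l * r := (mem_thickening_iff_infDist_lt hFne).1 hz
    have hdiff : Φ z - y z = (1 / l) • (z - y z) := by
      simp only [hΦ]; module
    have hd : dist (Φ z) (y z) = (1 / l) * dist z (y z) := by
      rw [dist_eq_norm, dist_eq_norm, hdiff, norm_smul, Real.norm_eq_abs, abs_of_nonneg hs0]
    rw [mem_thickening_iff_infDist_lt hFne]
    calc infDist (Φ z) F ≤ dist (Φ z) (y z) := infDist_le_dist_of_mem (hyF z)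
      _ = (1 / l) * dist z (y z) := hd
      _ < (1 / l) * (l * r) := by
          apply mul_lt_mul_of_pos_left _ (by positivity)
          rw [← hyd z]; exact hzS
      _ = r := by field_simp
  -- inverse map is Lipschitz
  have hinj : S.InjOn Φ := by
    intro z₁ h₁ z₂ h₂ he
    have := key z₁ z₂
    rw [he, dist_self] at this
    have hpos : 0 < 1 / l := by positivity
    have : dist z₁ z₂ ≤ 0 := by
      nlinarith [dist_nonneg (x := z₁) (y := z₂)]
    exact dist_le_zero.1 this
  set g := Function.invFunOn Φ S with hgdef
  have hgΦ : ∀ w ∈ Φ '' S, Φ (g w) = w ∧ g w ∈ S := by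
    intro w hw
    obtain ⟨z, hz, hzw⟩ := hw
    exact ⟨Function.invFunOn_eq ⟨z, hz, hzw⟩, Function.invFunOn_mem ⟨z, hz, hzw⟩⟩
  have hglip : LipschitzOnWith l.toNNReal g (Φ '' S) := by
    apply LipschitzOnWith.of_dist_le_mul
    intro w₁ h₁ w₂ h₂
    obtain ⟨hΦg₁, hg₁⟩ := hgΦ w₁ h₁
    obtain ⟨hΦg₂, hg₂⟩ := hgΦ w₂ h₂
    have := key (g w₁) (g w₂)
    rw [hΦg₁, hΦg₂] at this
    rw [Real.coe_toNNReal _ hl0.le]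
    calc dist (g w₁) (g w₂) = l * ((1 / l) * dist (g w₁) (g w₂)) := by field_simp
      _ ≤ l * dist w₁ w₂ := by
          apply mul_le_mul_of_nonneg_left this hl0.le
  have hSsub : S ⊆ g '' (Φ '' S) := by
    intro z hz
    exact ⟨Φ z, mem_image_of_mem Φ hz, hinj.leftInvOn_invFunOn hz⟩
  -- Hausdorff measure comparison
  have hfr : Module.finrank ℝ (EuclideanSpace ℝ (Fin d)) = d := finrank_euclideanSpace_fin
  have hμ : μH[(Module.finrank ℝ (EuclideanSpace ℝ (Fin d)) : ℝ)] S ≤ (l.toNNReal : ℝ≥0∞) ^ ((Module.finrank ℝ (EuclideanSpace ℝ (Fin d))) : ℝ) * μH[(Module.finrank ℝ (EuclideanSpace ℝ (Fin d)) : ℝ)] T := by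
    calc μH[(Module.finrank ℝ (EuclideanSpace ℝ (Fin d)) : ℝ)] S ≤ μH[(Module.finrank ℝ (EuclideanSpace ℝ (Fin d)) : ℝ)] (g '' (Φ '' S)) := measure_mono hSsub
      _ ≤ (l.toNNReal : ℝ≥0∞) ^ ((Module.finrank ℝ (EuclideanSpace ℝ (Fin d))) : ℝ) * μH[(Module.finrank ℝ (EuclideanSpace ℝ (Fin d)) : ℝ)] (Φ '' S) :=
          hglip.hausdorffMeasure_image_le (by positivity)
      _ ≤ (l.toNNReal : ℝ≥0∞) ^ ((Module.finrank ℝ (EuclideanSpace ℝ (Fin d))) : ℝ) * μH[(Module.finrank ℝ (EuclideanSpace ℝ (Fin d)) : ℝ)] T := by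
          have himg : Φ '' S ⊆ T := by
            rintro w ⟨z, hz, rfl⟩
            exact hmaps z hz
          exact mul_le_mul_right (measure_mono himg) _
  -- volume is a constant multiple of the Hausdorff measure
  set c := Measure.addHaarScalarFactor (volume : Measure (EuclideanSpace ℝ (Fin d)))
      μH[(Module.finrank ℝ (EuclideanSpace ℝ (Fin d)) : ℝ)] with hc
  have hvol : (volume : Measure (EuclideanSpace ℝ (Fin d))) =
      c • μH[(Module.finrank ℝ (EuclideanSpace ℝ (Fin d)) : ℝ)] :=
    Measure.isAddLeftInvariant_eq_smul _ _
  have hK : (l.toNNReal : ℝ≥0∞) ^ ((Module.finrank ℝ (EuclideanSpace ℝ (Fin d))) : ℝ) =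
      ENNReal.ofReal (l ^ d) := by
    rw [hfr, ENNReal.ofReal_pow hl0.le, ENNReal.ofReal, ← ENNReal.coe_pow,
      ENNReal.rpow_natCast, ENNReal.coe_pow]
  calc volume S = (c : ℝ≥0∞) * μH[(Module.finrank ℝ (EuclideanSpace ℝ (Fin d)) : ℝ)] S := by
        rw [hvol]; rfl
    _ ≤ (c : ℝ≥0∞) *
        ((l.toNNReal : ℝ≥0∞) ^ ((Module.finrank ℝ (EuclideanSpace ℝ (Fin d))) : ℝ) * μH[(Module.finrank ℝ (EuclideanSpace ℝ (Fin d)) : ℝ)] T) := by gcongr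
    _ = (l.toNNReal : ℝ≥0∞) ^ ((Module.finrank ℝ (EuclideanSpace ℝ (Fin d))) : ℝ) *
        ((c : ℝ≥0∞) * μH[(Module.finrank ℝ (EuclideanSpace ℝ (Fin d)) : ℝ)] T) := by ring
    _ = ENNReal.ofReal (l ^ d) * volume T := by rw [hK, hvol]; rfl

/-- For every nonempty `E ⊆ ℝ^d` and every `r > 0` with `vol(E_r) < ∞`, one has
`limsup_{h→0+} (vol(E_{r+h}) − vol(E_r))/h ≤ (d/r) · vol(E_r)`. -/
theorem limsup_volume_thickening_ratio_le (d : ℕ) (E : Set (EuclideanSpace ℝ (Fin d)))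
    (hE : E.Nonempty) (r : ℝ) (hr : 0 < r)
    (hfin : volume (Metric.thickening r E) < ⊤) :
    Filter.limsup
      (fun h : ℝ =>
        (volume (Metric.thickening (r + h) E) - volume (Metric.thickening r E)) /
          ENNReal.ofReal h)
      (𝓝[>] (0 : ℝ))
      ≤ ENNReal.ofReal (d / r) * volume (Metric.thickening r E) := by
  set V := volume (Metric.thickening r E) with hV
  set G : ℝ → ℝ≥0∞ := fun h => ENNReal.ofReal ((((r + h) / r) ^ d - 1) / h) * V with hG
  -- pointwise bound, eventually on 𝓝[>] 0
  have hev : ∀ᶠ h in 𝓝[>] (0 : ℝ),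
      (volume (Metric.thickening (r + h) E) - V) / ENNReal.ofReal h ≤ G h := by
    filter_upwards [self_mem_nhdsWithin] with h (hh : 0 < h)
    set l : ℝ := (r + h) / r with hl
    have hl1 : 1 ≤ l := by
      rw [hl, le_div_iff₀ hr]; linarith
    have hlr : l * r = r + h := by rw [hl]; field_simp
    have hld1 : (1 : ℝ) ≤ l ^ d := one_le_pow₀ hl1
    have hkn : volume (Metric.thickening (r + h) E) ≤ ENNReal.ofReal (l ^ d) * V := by
      rw [← hlr]; exact kneser E hE r hr l hl1
    have hsplit : ENNReal.ofReal (l ^ d) = ENNReal.ofReal (l ^ d - 1) + 1 := by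
      rw [← ENNReal.ofReal_one, ← ENNReal.ofReal_add (by linarith) zero_le_one]
      ring_nf
    have hsub : volume (Metric.thickening (r + h) E) - V ≤ ENNReal.ofReal (l ^ d - 1) * V := by
      rw [tsub_le_iff_right]
      calc volume (Metric.thickening (r + h) E) ≤ ENNReal.ofReal (l ^ d) * V := hkn
        _ = ENNReal.ofReal (l ^ d - 1) * V + V := by rw [hsplit, add_mul, one_mul]
    calc (volume (Metric.thickening (r + h) E) - V) / ENNReal.ofReal h
        ≤ ENNReal.ofReal (l ^ d - 1) * V / ENNReal.ofReal h := by
          exact ENNReal.div_le_div_right hsub _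
      _ = ENNReal.ofReal (l ^ d - 1) / ENNReal.ofReal h * V := by
          rw [div_eq_mul_inv, div_eq_mul_inv]; ring
      _ = G h := by rw [hG, ← ENNReal.ofReal_div_of_pos hh]
  -- the bound tends to (d/r) * V
  have hreal : Tendsto (fun h : ℝ => (((r + h) / r) ^ d - 1) / h) (𝓝[>] (0 : ℝ))
      (𝓝 ((d : ℝ) / r)) := by
    have hder : HasDerivAt (fun h : ℝ => ((r + h) / r) ^ d) ((d : ℝ) / r) 0 := by
      have h1 : HasDerivAt (fun h : ℝ => (r + h) / r) (1 / r) 0 := by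
        simpa using ((hasDerivAt_id (0 : ℝ)).const_add r).div_const r
      have := h1.pow d
      simpa [add_zero, div_self hr.ne', mul_one_div, Pi.pow_def, div_eq_mul_inv, hr.ne'] using this
    have hslope := hasDerivAt_iff_tendsto_slope.1 hder
    have hmono : 𝓝[>] (0 : ℝ) ≤ 𝓝[≠] (0 : ℝ) :=
      nhdsWithin_mono _ fun x hx => ne_of_gt hx
    have := hslope.mono_left hmono
    apply this.congr'
    filter_upwards [self_mem_nhdsWithin] with h (hh : 0 < h)
    rw [slope_def_field]
    simp [div_self hr.ne']
  have hGlim : Tendsto G (𝓝[>] (0 : ℝ)) (𝓝 (ENNReal.ofReal ((d : ℝ) / r) * V)) := by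
    apply ENNReal.Tendsto.mul_const (ENNReal.tendsto_ofReal hreal) (Or.inr hfin.ne)
  refine le_trans (limsup_le_limsup hev) ?_
  exact le_of_eq hGlim.limsup_eq
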